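/- Let b > 0 and let X have the Maxwell distribution with density f(x) = 4 b^{−3} π^{−1/2} x² exp{−x²/b²} on (0,∞). Then for every t > 0, E(X | X > t) = (t² + b²) b² r(t) / (2t²). -/

import Mathlib

open MeasureTheory

/-- For the Maxwell distribution with density
`f(x) = 4 b⁻³ π^(-1/2) x² exp{-x²/b²}` on `(0,∞)`, for every `t > 0`:
`E(X | X > t) = (t² + b²) b² r(t) / (2t²)`. -/
theorem conditional_mean_of_maxwell_distribution
    (b : ℝ) (hb : 0 < b)
    (f : ℝ → ℝ)
    (hf : ∀ x, 0 < x →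
      f x = 4 / (b ^ 3 * Real.sqrt Real.pi) * x ^ 2 * Real.exp (-(x ^ 2) / b ^ 2))
    (hf_supp : ∀ x, x ≤ 0 → f x = 0)
    (Fbar : ℝ → ℝ) (hFbar : ∀ t, Fbar t = ∫ x in Set.Ioi t, f x)
    (r : ℝ → ℝ) (hr : ∀ t, r t = f t / Fbar t)
    (t : ℝ) (ht : 0 < t) :
    (∫ x in Set.Ioi t, x * f x) / Fbar t = (t ^ 2 + b ^ 2) * b ^ 2 * r t / (2 * t ^ 2) := by
  set c : ℝ := 4 / (b ^ 3 * Real.sqrt Real.pi) with hc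
  have hc0 : 0 ≤ c := by positivity
  set G : ℝ → ℝ := fun x => -(c * b ^ 2 / 2) * ((x ^ 2 + b ^ 2) * Real.exp (-(x ^ 2) / b ^ 2))
    with hG
  have hb2 : (b:ℝ) ^ 2 ≠ 0 := by positivity
  have hderiv : ∀ x ∈ Set.Ioi t, HasDerivAt G (x * f x) x := by
    intro x hx
    have hx0 : 0 < x := ht.trans hx
    have h1 : HasDerivAt (fun x : ℝ => -(x ^ 2) / b ^ 2) (-(2 * x) / b ^ 2) x := by
      have := ((hasDerivAt_pow 2 x).neg).div_const (b ^ 2)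
      simpa using this
    have h2 := h1.exp
    have h3 : HasDerivAt (fun x : ℝ => x ^ 2 + b ^ 2) (2 * x) x := by
      simpa using (hasDerivAt_pow 2 x).add_const (b ^ 2)
    have h4 := (h3.mul h2).const_mul (-(c * b ^ 2 / 2))
    refine h4.congr_deriv ?_
    rw [hf x hx0]
    field_simp
    ring
  have hcont : ContinuousOn G (Set.Ici t) := by
    apply Continuous.continuousOn
    fun_prop
  have hnonneg : ∀ x ∈ Set.Ioi t, 0 ≤ x * f x := by
    intro x hx
    have hx0 : 0 < x := ht.trans hx
    rw [hf x hx0]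
    positivity
  have htend : Filter.Tendsto G Filter.atTop (nhds 0) := by
    have hu : Filter.Tendsto (fun x : ℝ => x ^ 2 / b ^ 2) Filter.atTop Filter.atTop :=
      (Filter.tendsto_pow_atTop two_ne_zero).atTop_div_const (by positivity)
    have h5 : Filter.Tendsto (fun x : ℝ => (x ^ 2 / b ^ 2) * Real.exp (-(x ^ 2 / b ^ 2)))
        Filter.atTop (nhds 0) := by
      have := (Real.tendsto_pow_mul_exp_neg_atTop_nhds_zero 1).comp hu
      simpa [Function.comp_def] using this
    have h6 : Filter.Tendsto (fun x : ℝ => Real.exp (-(x ^ 2 / b ^ 2)))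
        Filter.atTop (nhds 0) := by
      have : Filter.Tendsto (fun u : ℝ => Real.exp (-u)) Filter.atTop (nhds 0) := by
        simpa using Real.tendsto_exp_neg_atTop_nhds_zero
      exact this.comp hu
    have h7 := ((h5.const_mul (b ^ 2)).add (h6.const_mul (b ^ 2))).const_mul (-(c * b ^ 2 / 2))
    have heq : G = fun x : ℝ => -(c * b ^ 2 / 2) *
        (b ^ 2 * ((x ^ 2 / b ^ 2) * Real.exp (-(x ^ 2 / b ^ 2)))
          + b ^ 2 * Real.exp (-(x ^ 2 / b ^ 2))) := by
      funext x
      rw [hG]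
      simp only [neg_div]
      field_simp
    rw [heq]
    simpa using h7
  have key : ∫ x in Set.Ioi t, x * f x
      = c * b ^ 2 / 2 * ((t ^ 2 + b ^ 2) * Real.exp (-(t ^ 2) / b ^ 2)) := by
    rw [integral_Ioi_of_hasDerivAt_of_nonneg (hcont t Set.self_mem_Ici) hderiv hnonneg htend]
    rw [hG]
    ring
  rw [key, hr, hf t ht]
  have h8 : (t ^ 2 + b ^ 2) * b ^ 2 * (c * t ^ 2 * Real.exp (-(t ^ 2) / b ^ 2) / Fbar t)
      / (2 * t ^ 2)
      = ((t ^ 2 + b ^ 2) * b ^ 2 * (c * t ^ 2 * Real.exp (-(t ^ 2) / b ^ 2)) / (2 * t ^ 2))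
        / Fbar t := by ring
  rw [h8]
  congr 1
  field_simp
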